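/- arXiv:2502.03104 — 4 statements merged into one kernel-verified Lean document; each statement's English description precedes it below -/
import Mathlib

section
/- Let d be a probability vector on a finite state space S, P a row-stochastic matrix on S with dᵀP = dᵀ, γ ∈ (0,1), Φ an |S| × m real feature matrix, and D = diag(d). Define A = Φᵀ(D − ddᵀ)(I − γP)Φ. Then A + Aᵀ = (1 − γ²)·Cov(φ,φ) + Cov(φ − γφ', φ − γφ'), where under the joint law (s ∼ d, s' ∼ P(s,·)) one has Cov(φ,φ) = Φᵀ(D − ddᵀ)Φ and Cov(φ − γφ', φ − γφ') = E[(φ(s) − γφ(s'))(φ(s) − γφ(s'))ᵀ] − E[φ(s) − γφ(s')]E[φ(s) − γφ(s')]ᵀ. -/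
open Matrix BigOperators

/-- with `A = Φᵀ(D − ddᵀ)(I − γP)Φ`, one has
`A + Aᵀ = (1 − γ²)·Cov(φ,φ) + Cov(φ − γφ', φ − γφ')`, where
`Cov(φ,φ) = Φᵀ(D − ddᵀ)Φ` and the second covariance is taken under the joint law
`(s ∼ d, s' ∼ P(s,·))`. -/
theorem A_plus_A_transpose_decomposition
    {S : Type*} [Fintype S] [DecidableEq S] {m : ℕ}
    (d : S → ℝ) (hd_nonneg : ∀ s, 0 ≤ d s) (hd_sum : ∑ s, d s = 1)
    (P : Matrix S S ℝ)
    (hP_nonneg : ∀ s s', 0 ≤ P s s') (hP_row : ∀ s, ∑ s', P s s' = 1)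
    (hstat : Matrix.vecMul d P = d)
    (γ : ℝ) (hγ : γ ∈ Set.Ioo (0 : ℝ) 1)
    (Φ : Matrix S (Fin m) ℝ) :
    let D : Matrix S S ℝ := Matrix.diagonal d
    let A : Matrix (Fin m) (Fin m) ℝ :=
      Φᵀ * (D - vecMulVec d d) * (1 - γ • P) * Φ
    let Eψ : Fin m → ℝ := ∑ s, ∑ s', (d s * P s s') • (Φ s - γ • Φ s')
    let Covψ : Matrix (Fin m) (Fin m) ℝ :=
      (∑ s, ∑ s', (d s * P s s') • vecMulVec (Φ s - γ • Φ s') (Φ s - γ • Φ s')) -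
        vecMulVec Eψ Eψ
    A + Aᵀ = (1 - γ ^ 2) • (Φᵀ * (D - vecMulVec d d) * Φ) + Covψ := by
  intro D A Eψ Covψ
  have hstat' : ∀ t, ∑ s, d s * P s t = d t := fun t => by
    have := congrFun hstat t
    simpa [Matrix.vecMul, dotProduct] using this
  -- entrywise forms of the basic matrices
  have hXe : ∀ i j, (Φᵀ * D * Φ) i j = ∑ s, d s * (Φ s i * Φ s j) := by
    intro i j
    simp only [Matrix.mul_apply, Matrix.transpose_apply, D, Matrix.diagonal_apply, mul_ite, ite_mul, mul_zero, zero_mul,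
      Finset.sum_ite_eq, Finset.sum_ite_eq', Finset.mem_univ, if_true]
    exact Finset.sum_congr rfl fun s _ => by ring
  have hYe : ∀ i j, (Φᵀ * vecMulVec d d * Φ) i j
      = (∑ s, d s * Φ s i) * (∑ s, d s * Φ s j) := by
    intro i j
    simp only [Matrix.mul_apply, Matrix.transpose_apply, vecMulVec_apply]
    simp_rw [Finset.sum_mul, Finset.mul_sum]
    rw [Finset.sum_comm]
    exact Finset.sum_congr rfl fun s _ => Finset.sum_congr rfl fun t _ => by ring
  have hZe : ∀ i j, (Φᵀ * (D * P) * Φ) i j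
      = ∑ s, ∑ s', d s * P s s' * (Φ s i * Φ s' j) := by
    intro i j
    simp only [Matrix.mul_apply, Matrix.transpose_apply, D, Matrix.diagonal_apply, mul_ite, ite_mul, mul_zero, zero_mul,
      Finset.sum_ite_eq, Finset.sum_ite_eq', Finset.mem_univ, if_true]
    simp_rw [Finset.sum_mul]
    rw [Finset.sum_comm]
    exact Finset.sum_congr rfl fun s _ => Finset.sum_congr rfl fun t _ => by ring
  have hWe : ∀ i j, (Φᵀ * (Pᵀ * D) * Φ) i j
      = ∑ s, ∑ s', d s * P s s' * (Φ s' i * Φ s j) := by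
    intro i j
    simp only [Matrix.mul_apply, Matrix.transpose_apply, D, Matrix.diagonal_apply, mul_ite, ite_mul, mul_zero, zero_mul,
      Finset.sum_ite_eq, Finset.sum_ite_eq', Finset.mem_univ, if_true]
    simp_rw [Finset.sum_mul]
    exact Finset.sum_congr rfl fun s _ => Finset.sum_congr rfl fun t _ => by ring
  -- sum absorption facts
  have habs1 : ∀ (f : S → ℝ), ∑ s, d s * f s = ∑ s, ∑ s', d s * P s s' * f s := by
    intro f
    refine Finset.sum_congr rfl fun s _ => ?_
    rw [show (∑ s', d s * P s s' * f s) = (∑ s', d s * P s s') * f s from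
      (Finset.sum_mul _ _ _).symm, ← Finset.mul_sum, hP_row s, mul_one]
  have habs2 : ∀ (f : S → ℝ), ∑ s, d s * f s = ∑ s, ∑ s', d s * P s s' * f s' := by
    intro f
    rw [Finset.sum_comm]
    refine Finset.sum_congr rfl fun t _ => ?_
    rw [← Finset.sum_mul, hstat' t]
  -- the double sum of outer products
  have hsum : (∑ s, ∑ s', (d s * P s s') • vecMulVec (Φ s - γ • Φ s') (Φ s - γ • Φ s'))
      = (1 + γ ^ 2) • (Φᵀ * D * Φ) - γ • (Φᵀ * (D * P) * Φ) - γ • (Φᵀ * (Pᵀ * D) * Φ) := by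
    ext i j
    simp only [Matrix.sub_apply, Matrix.smul_apply, Matrix.sum_apply, vecMulVec_apply,
      Pi.sub_apply, Pi.smul_apply, smul_eq_mul, hXe, hZe, hWe]
    have expand : (∑ s, ∑ s', d s * P s s' *
          ((Φ s i - γ * Φ s' i) * (Φ s j - γ * Φ s' j)))
        = (∑ s, ∑ s', d s * P s s' * ((fun u => Φ u i * Φ u j) s))
          + γ ^ 2 * (∑ s, ∑ s', d s * P s s' * ((fun u => Φ u i * Φ u j) s'))
          - γ * (∑ s, ∑ s', d s * P s s' * (Φ s i * Φ s' j))
          - γ * (∑ s, ∑ s', d s * P s s' * (Φ s' i * Φ s j)) := by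
      simp only [Finset.mul_sum, ← Finset.sum_add_distrib, ← Finset.sum_sub_distrib]
      exact Finset.sum_congr rfl fun s _ => Finset.sum_congr rfl fun s' _ => by ring
    rw [expand, ← habs1 (fun u => Φ u i * Φ u j), ← habs2 (fun u => Φ u i * Φ u j)]
    ring
  -- the mean vector
  have hEψ : ∀ i, Eψ i = (1 - γ) * ∑ s, d s * Φ s i := by
    intro i
    simp only [Eψ, Finset.sum_apply, Pi.smul_apply, Pi.sub_apply, smul_eq_mul]
    have expand : (∑ s, ∑ s', d s * P s s' * (Φ s i - γ * Φ s' i))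
        = (∑ s, ∑ s', d s * P s s' * ((fun u => Φ u i) s))
          - γ * (∑ s, ∑ s', d s * P s s' * ((fun u => Φ u i) s')) := by
      simp only [Finset.mul_sum, ← Finset.sum_sub_distrib]
      exact Finset.sum_congr rfl fun s _ => Finset.sum_congr rfl fun s' _ => by ring
    rw [expand, ← habs1 (fun u => Φ u i), ← habs2 (fun u => Φ u i)]
    ring
  have hE : vecMulVec Eψ Eψ = ((1 - γ) ^ 2) • (Φᵀ * vecMulVec d d * Φ) := by
    ext i j
    simp only [vecMulVec_apply, Matrix.smul_apply, smul_eq_mul, hYe, hEψ]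
    ring
  -- stationarity in matrix form
  have hddP : vecMulVec d d * P = vecMulVec d d := by
    ext s t
    simp only [Matrix.mul_apply, vecMulVec_apply]
    simp_rw [mul_assoc, ← Finset.mul_sum, hstat' t]
  have hPdd : Pᵀ * vecMulVec d d = vecMulVec d d := by
    ext s t
    simp only [Matrix.mul_apply, vecMulVec_apply, Matrix.transpose_apply]
    simp_rw [← mul_assoc, mul_comm (P _ s) (d _)]
    rw [← Finset.sum_mul, hstat' s]
  -- expand A + Aᵀ
  have hDt : Dᵀ = D := Matrix.diagonal_transpose d
  have hvt : (vecMulVec d d)ᵀ = vecMulVec d d := by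
    ext s t; simp [vecMulVec_apply, mul_comm]
  have hAT : Aᵀ = Φᵀ * ((1 - γ • Pᵀ) * (D - vecMulVec d d)) * Φ := by
    simp only [A, Matrix.transpose_mul, Matrix.transpose_sub, Matrix.transpose_smul,
      Matrix.transpose_one, Matrix.transpose_transpose, hDt, hvt, Matrix.mul_assoc]
  have hA1 : A = Φᵀ * ((D - vecMulVec d d) * (1 - γ • P)) * Φ := by
    simp only [A, Matrix.mul_assoc]
  have key : A + Aᵀ = Φᵀ * ((D - vecMulVec d d) * (1 - γ • P)
      + (1 - γ • Pᵀ) * (D - vecMulVec d d)) * Φ := by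
    rw [hAT, Matrix.mul_add, Matrix.add_mul, hA1]
  have hmid : (D - vecMulVec d d) * (1 - γ • P) + (1 - γ • Pᵀ) * (D - vecMulVec d d)
      = (2:ℝ) • D - (2 - 2*γ) • vecMulVec d d - γ • (D * P) - γ • (Pᵀ * D) := by
    simp only [Matrix.sub_mul, Matrix.mul_sub, Matrix.mul_one, Matrix.one_mul,
      Matrix.mul_smul, Matrix.smul_mul, hddP, hPdd]
    module
  rw [key, hmid]
  show _ = _ + (_ - _)
  rw [hsum, hE]
  simp only [Matrix.mul_sub, Matrix.sub_mul, Matrix.mul_add, Matrix.add_mul,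
    Matrix.mul_smul, Matrix.smul_mul]
  module
end

section
/- Let d be a probability vector on a finite state space S, P a row-stochastic matrix on S with dᵀP = dᵀ, γ ∈ (0,1), Φ an |S| × m real feature matrix, and D = diag(d). Let A = Φᵀ(D − ddᵀ)(I − γP)Φ. Then A is positive semidefinite in the sense that xᵀAx ≥ 0 for every x ∈ ℝ^m; and if A is nonsingular, then A is positive definite: xᵀAx > 0 for every nonzero x ∈ ℝ^m. -/
open Matrix BigOperators

section Aux
variable {S : Type*} [Fintype S]

/-- weighted Cauchy–Schwarz: (∑ w f)² ≤ (∑ w)(∑ w f²) for w ≥ 0. -/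
lemma aux_cs (w f : S → ℝ) (hw : ∀ s, 0 ≤ w s) :
    (∑ s, w s * f s) ^ 2 ≤ (∑ s, w s) * ∑ s, w s * (f s) ^ 2 := by
  have h := Finset.sum_mul_sq_le_sq_mul_sq Finset.univ
      (fun s => Real.sqrt (w s)) (fun s => Real.sqrt (w s) * f s)
  have e1 : ∀ s : S, Real.sqrt (w s) * (Real.sqrt (w s) * f s) = w s * f s := by
    intro s; rw [← mul_assoc, Real.mul_self_sqrt (hw s)]
  have e2 : ∀ s : S, Real.sqrt (w s) ^ 2 = w s := fun s => Real.sq_sqrt (hw s)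
  have e3 : ∀ s : S, (Real.sqrt (w s) * f s) ^ 2 = w s * f s ^ 2 := by
    intro s; rw [mul_pow, e2]
  simpa only [e1, e2, e3] using h
end Aux

/-- the matrix `A = Φᵀ(D − ddᵀ)(I − γP)Φ` is positive semidefinite
(`xᵀAx ≥ 0` for all `x`), and if it is nonsingular it is positive definite
(`xᵀAx > 0` for all nonzero `x`). -/
theorem centered_td_matrix_psd_and_pd
    {S : Type*} [Fintype S] [DecidableEq S] {m : ℕ}
    (d : S → ℝ) (hd_nonneg : ∀ s, 0 ≤ d s) (hd_sum : ∑ s, d s = 1)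
    (P : Matrix S S ℝ)
    (hP_nonneg : ∀ s s', 0 ≤ P s s') (hP_row : ∀ s, ∑ s', P s s' = 1)
    (hstat : Matrix.vecMul d P = d)
    (γ : ℝ) (hγ : γ ∈ Set.Ioo (0 : ℝ) 1)
    (Φ : Matrix S (Fin m) ℝ) :
    let A : Matrix (Fin m) (Fin m) ℝ :=
      Φᵀ * (Matrix.diagonal d - vecMulVec d d) * (1 - γ • P) * Φ
    (∀ x : Fin m → ℝ, 0 ≤ x ⬝ᵥ A.mulVec x) ∧
      (IsUnit A.det → ∀ x : Fin m → ℝ, x ≠ 0 → 0 < x ⬝ᵥ A.mulVec x) := by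
  intro A
  obtain ⟨hγ0, hγ1⟩ := hγ
  have key : ∀ x : Fin m → ℝ,
      x ⬝ᵥ A.mulVec x =
        (∑ s, d s * (Φ.mulVec x s) ^ 2)
          - γ * (∑ s, d s * Φ.mulVec x s * P.mulVec (Φ.mulVec x) s)
          - (1 - γ) * (d ⬝ᵥ Φ.mulVec x) ^ 2 := by
    intro x
    set y := Φ.mulVec x with hy
    set z : S → ℝ := y - γ • P.mulVec y with hz
    have h1 : (1 - γ • P).mulVec y = z := by
      rw [Matrix.sub_mulVec, Matrix.one_mulVec, Matrix.smul_mulVec]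
    have hAx : A.mulVec x = Φᵀ.mulVec ((Matrix.diagonal d - vecMulVec d d).mulVec z) := by
      show (Φᵀ * (Matrix.diagonal d - vecMulVec d d) * (1 - γ • P) * Φ).mulVec x = _
      rw [← Matrix.mulVec_mulVec, ← Matrix.mulVec_mulVec, ← Matrix.mulVec_mulVec, ← hy, h1]
    have hdz : d ⬝ᵥ z = (1 - γ) * (d ⬝ᵥ y) := by
      have hP' : d ⬝ᵥ P.mulVec y = d ⬝ᵥ y := by rw [Matrix.dotProduct_mulVec, hstat]
      rw [hz, dotProduct_sub, dotProduct_smul, hP', smul_eq_mul]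
      ring
    rw [hAx, Matrix.dotProduct_mulVec, Matrix.vecMul_transpose, ← hy]
    have hMz : ∀ s, ((Matrix.diagonal d - vecMulVec d d).mulVec z) s
        = d s * z s - d s * (d ⬝ᵥ z) := by
      intro s
      rw [Matrix.sub_mulVec]
      simp only [Pi.sub_apply, Matrix.mulVec_diagonal]
      congr 1
      simp [Matrix.mulVec, Matrix.vecMulVec, dotProduct, Finset.mul_sum, mul_assoc]
    have hdy : (∑ s, d s * y s) = d ⬝ᵥ y := rfl
    have expand : y ⬝ᵥ ((Matrix.diagonal d - vecMulVec d d).mulVec z)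
        = (∑ s, d s * y s * z s) - (d ⬝ᵥ z) * (d ⬝ᵥ y) := by
      calc y ⬝ᵥ ((Matrix.diagonal d - vecMulVec d d).mulVec z)
          = ∑ s, (d s * y s * z s - (d ⬝ᵥ z) * (d s * y s)) := by
            simp only [dotProduct, hMz]
            exact Finset.sum_congr rfl fun s _ => by ring
        _ = (∑ s, d s * y s * z s) - (d ⬝ᵥ z) * ∑ s, d s * y s := by
            rw [Finset.sum_sub_distrib, Finset.mul_sum]
        _ = _ := by rw [hdy]
    rw [expand, hdz]
    have hsum : (∑ s, d s * y s * z s)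
        = (∑ s, d s * y s ^ 2) - γ * ∑ s, d s * y s * P.mulVec y s := by
      rw [Finset.mul_sum, ← Finset.sum_sub_distrib]
      refine Finset.sum_congr rfl fun s _ => ?_
      have : z s = y s - γ * P.mulVec y s := by simp [hz]
      rw [this]; ring
    rw [hsum]; ring
  have hT : ∀ x : Fin m → ℝ,
      (∑ s, d s * Φ.mulVec x s * P.mulVec (Φ.mulVec x) s) ≤ ∑ s, d s * (Φ.mulVec x s) ^ 2 := by
    intro x
    set y := Φ.mulVec x
    have jensen : ∀ s, (P.mulVec y s) ^ 2 ≤ ∑ s', P s s' * (y s') ^ 2 := by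
      intro s
      have := aux_cs (P s) y (hP_nonneg s)
      rw [hP_row s, one_mul] at this
      simpa [Matrix.mulVec, dotProduct] using this
    have hPy2 : (∑ s, d s * (P.mulVec y s) ^ 2) ≤ ∑ s, d s * (y s) ^ 2 := by
      calc (∑ s, d s * (P.mulVec y s) ^ 2)
          ≤ ∑ s, d s * ∑ s', P s s' * (y s') ^ 2 :=
            Finset.sum_le_sum fun s _ =>
              mul_le_mul_of_nonneg_left (jensen s) (hd_nonneg s)
        _ = ∑ s', (∑ s, d s * P s s') * (y s') ^ 2 := by
            simp only [Finset.mul_sum, Finset.sum_mul]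
            rw [Finset.sum_comm]
            exact Finset.sum_congr rfl fun s' _ => Finset.sum_congr rfl fun s _ => by ring
        _ = ∑ s', d s' * (y s') ^ 2 := by
            refine Finset.sum_congr rfl fun s' _ => ?_
            congr 1
            have := congrFun hstat s'
            simpa [Matrix.vecMul, dotProduct] using this
    have amgm : ∀ s, d s * y s * P.mulVec y s
        ≤ d s * (y s) ^ 2 / 2 + d s * (P.mulVec y s) ^ 2 / 2 := by
      intro s
      nlinarith [mul_nonneg (hd_nonneg s) (sq_nonneg (y s - P.mulVec y s))]
    calc (∑ s, d s * y s * P.mulVec y s)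
        ≤ ∑ s, (d s * (y s) ^ 2 / 2 + d s * (P.mulVec y s) ^ 2 / 2) :=
          Finset.sum_le_sum fun s _ => amgm s
      _ = (∑ s, d s * (y s) ^ 2) / 2 + (∑ s, d s * (P.mulVec y s) ^ 2) / 2 := by
          rw [Finset.sum_add_distrib, Finset.sum_div, Finset.sum_div]
      _ ≤ ∑ s, d s * (y s) ^ 2 := by linarith
  have hC : ∀ x : Fin m → ℝ, (d ⬝ᵥ Φ.mulVec x) ^ 2 ≤ ∑ s, d s * (Φ.mulVec x s) ^ 2 := by
    intro x
    have := aux_cs d (Φ.mulVec x) hd_nonneg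
    rw [hd_sum, one_mul] at this
    simpa [dotProduct] using this
  have psd : ∀ x : Fin m → ℝ, 0 ≤ x ⬝ᵥ A.mulVec x := by
    intro x
    rw [key x]
    nlinarith [hT x, hC x]
  refine ⟨psd, ?_⟩
  intro hdet x hx
  rcases lt_or_eq_of_le (psd x) with h | h
  · exact h
  exfalso
  set y := Φ.mulVec x with hy
  have hQ0 : (∑ s, d s * (y s) ^ 2)
      - γ * (∑ s, d s * y s * P.mulVec y s) - (1 - γ) * (d ⬝ᵥ y) ^ 2 = 0 := by
    rw [← key x, ← h]
  set c := d ⬝ᵥ y with hc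
  have heq : (∑ s, d s * (y s) ^ 2) = c ^ 2 := by
    nlinarith [hT x, hC x]
  have hdyc : (∑ s, d s * y s) = c := rfl
  have hvar : ∑ s, d s * (y s - c) ^ 2 = 0 := by
    have expand : ∑ s, d s * (y s - c) ^ 2
        = (∑ s, d s * y s ^ 2) - 2 * c * (∑ s, d s * y s) + c ^ 2 * ∑ s, d s := by
      simp only [Finset.mul_sum]
      rw [← Finset.sum_sub_distrib, ← Finset.sum_add_distrib]
      exact Finset.sum_congr rfl fun s _ => by ring
    rw [expand, hdyc, hd_sum, heq]; ring
  have hconst : ∀ s, d s ≠ 0 → y s = c := by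
    intro s hds
    have hterm : d s * (y s - c) ^ 2 = 0 :=
      (Finset.sum_eq_zero_iff_of_nonneg
        (fun t _ => mul_nonneg (hd_nonneg t) (sq_nonneg _))).mp hvar s (Finset.mem_univ s)
    rcases mul_eq_zero.mp hterm with h' | h'
    · exact absurd h' hds
    · have := pow_eq_zero_iff (n := 2) (by norm_num) |>.mp h'
      linarith [sub_eq_zero.mp this]
  have hPzero : ∀ s s', 0 < d s → d s' = 0 → P s s' = 0 := by
    intro s s' hds hds'
    have hsum : ∑ t, d t * P t s' = 0 := by
      have := congrFun hstat s'
      simp only [Matrix.vecMul, dotProduct] at this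
      rw [this, hds']
    have := (Finset.sum_eq_zero_iff_of_nonneg
      (fun t _ => mul_nonneg (hd_nonneg t) (hP_nonneg t s'))).mp hsum s (Finset.mem_univ s)
    rcases mul_eq_zero.mp this with h' | h'
    · linarith
    · exact h'
  have hPy : ∀ s, 0 < d s → P.mulVec y s = c := by
    intro s hds
    have : P.mulVec y s = ∑ s', P s s' * c := by
      simp only [Matrix.mulVec, dotProduct]
      refine Finset.sum_congr rfl fun s' _ => ?_
      by_cases h' : d s' = 0
      · rw [hPzero s s' hds h']; ring
      · rw [hconst s' h']
    rw [this, ← Finset.sum_mul, hP_row s, one_mul]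
  set z : S → ℝ := y - γ • P.mulVec y with hz
  have hdz : d ⬝ᵥ z = (1 - γ) * c := by
    have hP' : d ⬝ᵥ P.mulVec y = d ⬝ᵥ y := by rw [Matrix.dotProduct_mulVec, hstat]
    rw [hz, dotProduct_sub, dotProduct_smul, hP', smul_eq_mul, ← hc]
    ring
  have hMz : (Matrix.diagonal d - vecMulVec d d).mulVec z = 0 := by
    funext s
    rw [Matrix.sub_mulVec]
    simp only [Pi.sub_apply, Matrix.mulVec_diagonal, Pi.zero_apply]
    have hvv : ((vecMulVec d d).mulVec z) s = d s * (d ⬝ᵥ z) := by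
      simp [Matrix.mulVec, Matrix.vecMulVec, dotProduct, Finset.mul_sum, mul_assoc]
    rw [hvv, hdz]
    by_cases hds : d s = 0
    · rw [hds]; ring
    · have hds' : 0 < d s := lt_of_le_of_ne (hd_nonneg s) (Ne.symm hds)
      have : z s = (1 - γ) * c := by
        simp only [hz, Pi.sub_apply, Pi.smul_apply, smul_eq_mul]
        rw [hconst s hds, hPy s hds']; ring
      rw [this]; ring
  have hAx : A.mulVec x = 0 := by
    have hA : A = Φᵀ * (Matrix.diagonal d - vecMulVec d d) * (1 - γ • P) * Φ := rfl
    rw [hA, ← Matrix.mulVec_mulVec, ← Matrix.mulVec_mulVec, ← Matrix.mulVec_mulVec, ← hy]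
    rw [show (1 - γ • P).mulVec y = z from by
      rw [Matrix.sub_mulVec, Matrix.one_mulVec, Matrix.smul_mulVec]]
    rw [hMz, Matrix.mulVec_zero]
  have hx0 : x = 0 := by
    have hinv := Matrix.nonsing_inv_mul A hdet
    calc x = (1 : Matrix (Fin m) (Fin m) ℝ).mulVec x := by rw [Matrix.one_mulVec]
      _ = (A⁻¹ * A).mulVec x := by rw [hinv]
      _ = A⁻¹.mulVec (A.mulVec x) := by rw [Matrix.mulVec_mulVec]
      _ = 0 := by rw [hAx, Matrix.mulVec_zero]
  exact hx hx0
end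

section
/- Let 0 ≤ a ≤ 1 and 0 ≤ b ≤ 1 with 1 − a + b ≠ 0, let 0 ≤ x ≤ 1, 0 ≤ y ≤ 1, γ ∈ (0,1), and m, n ∈ ℝ. Let d_μ = (b/(1−a+b), (1−a)/(1−a+b))ᵀ, D = diag(d_μ), P_π = [[x, 1−x],[y, 1−y]], and Φ = (m, n)ᵀ ∈ ℝ^{2×1}. Then the 1 × 1 matrix A = Φᵀ(D − d_μ d_μᵀ)(I − γP_π)Φ equals the scalar ((1−a)b/(1−a+b)²) · (1 − xγ + yγ) · (m − n)². -/
open Matrix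

set_option maxHeartbeats 800000 in
/-- in the general two-state off-policy counterexample the
`1 × 1` matrix `A = Φᵀ(D − d_μd_μᵀ)(I − γP_π)Φ` equals
`((1−a)b/(1−a+b)²)·(1 − xγ + yγ)·(m − n)²`. -/
theorem two_state_ctd_matrix_value
    (a b x y γ m n : ℝ)
    (ha : 0 ≤ a ∧ a ≤ 1) (hb : 0 ≤ b ∧ b ≤ 1) (hden : 1 - a + b ≠ 0)
    (hx : 0 ≤ x ∧ x ≤ 1) (hy : 0 ≤ y ∧ y ≤ 1)
    (hγ : γ ∈ Set.Ioo (0 : ℝ) 1) :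
    let dμ : Fin 2 → ℝ := ![b / (1 - a + b), (1 - a) / (1 - a + b)]
    let D : Matrix (Fin 2) (Fin 2) ℝ := Matrix.diagonal dμ
    let Pπ : Matrix (Fin 2) (Fin 2) ℝ := !![x, 1 - x; y, 1 - y]
    let Φ : Matrix (Fin 2) (Fin 1) ℝ := !![m; n]
    Φᵀ * (D - vecMulVec dμ dμ) * (1 - γ • Pπ) * Φ =
      !![(1 - a) * b / (1 - a + b) ^ 2 * (1 - x * γ + y * γ) * (m - n) ^ 2] := by
  intro dμ D Pπ Φ
  ext i j
  fin_cases i; fin_cases j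
  simp only [Matrix.mul_apply, Fin.sum_univ_two, Matrix.sub_apply, Matrix.smul_apply,
    Matrix.one_apply, Matrix.transpose_apply, Matrix.diagonal_apply, vecMulVec_apply,
    D, Pπ, Φ, dμ, Matrix.cons_val', Matrix.cons_val_zero, Matrix.cons_val_one,
    Matrix.head_cons, Matrix.empty_val', Matrix.cons_val_fin_one, Matrix.head_fin_const,
    Fin.isValue, smul_eq_mul]
  norm_num
  field_simp
  ring
end

section
/- (Two-state off-policy counterexample.) Let 0 ≤ a < 1 and 0 < b ≤ 1, let 0 ≤ x ≤ 1, 0 ≤ y ≤ 1, γ ∈ (0,1), and m, n ∈ ℝ with m ≠ 0, n ≠ 0, and m ≠ n. Let d_μ = (b/(1−a+b), (1−a)/(1−a+b))ᵀ, D = diag(d_μ), P_π = [[x, 1−x],[y, 1−y]], and Φ = (m, n)ᵀ ∈ ℝ^{2×1}. Then the 1 × 1 matrix A = Φᵀ(D − d_μ d_μᵀ)(I − γP_π)Φ is positive definite, i.e. its single entry is a strictly positive real number. -/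
open Matrix

/-- two-state off-policy counterexample: under the stated
conditions the `1 × 1` matrix `A = Φᵀ(D − d_μd_μᵀ)(I − γP_π)Φ` is positive
definite, i.e. its single entry is strictly positive. -/
theorem two_state_ctd_matrix_pos_def
    (a b x y γ m n : ℝ)
    (ha : 0 ≤ a ∧ a < 1) (hb : 0 < b ∧ b ≤ 1)
    (hx : 0 ≤ x ∧ x ≤ 1) (hy : 0 ≤ y ∧ y ≤ 1)
    (hγ : γ ∈ Set.Ioo (0 : ℝ) 1)
    (hm : m ≠ 0) (hn : n ≠ 0) (hmn : m ≠ n) :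
    let dμ : Fin 2 → ℝ := ![b / (1 - a + b), (1 - a) / (1 - a + b)]
    let D : Matrix (Fin 2) (Fin 2) ℝ := Matrix.diagonal dμ
    let Pπ : Matrix (Fin 2) (Fin 2) ℝ := !![x, 1 - x; y, 1 - y]
    let Φ : Matrix (Fin 2) (Fin 1) ℝ := !![m; n]
    let A : Matrix (Fin 1) (Fin 1) ℝ := Φᵀ * (D - vecMulVec dμ dμ) * (1 - γ • Pπ) * Φ
    0 < A 0 0 := by
  intro dμ D Pπ Φ A
  obtain ⟨ha0, ha1⟩ := ha
  obtain ⟨hb0, hb1⟩ := hb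
  obtain ⟨hγ0, hγ1⟩ := hγ
  have hs : 0 < 1 - a + b := by linarith
  have key : A 0 0 = (b * (1 - a) / (1 - a + b)^2) * (1 - γ*(x-y)) * (m-n)^2 := by
    simp only [A]
    simp [Matrix.mul_apply, Fin.sum_univ_succ, vecMulVec_apply, Matrix.sub_apply,
      Matrix.one_apply, Matrix.diagonal, dμ, D, Pπ, Φ, Matrix.transpose_apply]
    field_simp
    ring
  rw [key]
  have h1 : 0 < 1 - γ*(x-y) := by nlinarith
  have hmn' : m - n ≠ 0 := sub_ne_zero.mpr hmn
  have h2 : 0 < (m-n)^2 := by positivity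
  have h3 : 0 < b * (1-a) / (1-a+b)^2 :=
    div_pos (mul_pos hb0 (by linarith)) (by positivity)
  exact mul_pos (mul_pos h3 h1) h2
end
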